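/- Let Ω ⊂ ℝ^m be a bounded domain with smooth boundary, u ∈ H¹₀(Ω) the weak solution of −div(A∇u) + σu = f with f ∈ L²(Ω), σ = const ≥ 0, and A a symmetric matrix field with μ₁|ξ|² ≤ Aξ·ξ ≤ μ₂|ξ|². Let v ∈ H¹₀(Ω) be any approximation and σ* > 0 satisfy ‖u−v‖²_A / ‖u−v‖²_{L²(Ω)} ≥ σ*. Then for any z ∈ H(Ω, div), if 0 ≤ σ ≤ σ*: |||v−u|||² ≤ (2/(1+σ/σ*)) · ( ‖A∇v + z‖²_{A^{-1}} + (1/σ*)·‖f − σv − div z‖²_{L²(Ω)} ), where |||w|||² = ‖w‖²_A + σ‖w‖²_{L²(Ω)} and ‖w‖²_A = ∫_Ω ∇w·A∇w. -/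

import Mathlib

private lemma aux_alg (Qe Ne Qy R2 P R σ σs : ℝ) (hσ0 : 0 ≤ σ) (hσs : 0 < σs) (hσσ : σ ≤ σs)
    (hcrit : σs * Ne ≤ Qe)
    (hid : Qe + σ * Ne = P - R)
    (F1 : 4*σs*(σs+σ)*P ≤ 4*σs^2*Qy + (σs+σ)^2*Qe)
    (F2 : -(4*(σs+σ)*R) ≤ 4*R2 + (σs+σ)^2*Ne) :
    (Qe + σ * Ne) * (σs + σ) ≤ 2*σs*Qy + 2*R2 := by
  have F2' : -(4*σs*(σs+σ)*R) ≤ 4*σs*R2 + σs*(σs+σ)^2*Ne := by nlinarith [F2, hσs.le]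
  have hkey : 0 ≤ (σs+σ)*((σs-σ)*(Qe-σs*Ne)) :=
    mul_nonneg (by linarith) (mul_nonneg (by linarith) (by linarith))
  nlinarith [F1, F2', hkey, hσs, mul_le_mul_of_nonneg_left hid.le hσs.le]


/-- Theorem 3.1 (modified Aubin a posteriori majorant), case 0 ≤ σ ≤ σ*.
Abstract functional-analytic formalization: `L` plays the role of `L²(Ω)` (scalar
functions), `W` the role of `(L²(Ω))^m` (vector fields), `grad : H¹₀ → L²` is the
gradient, `dvg` the divergence of fields in `H(Ω,div)` (integration by parts is a
hypothesis), `A` and `Ainv` the symmetric coefficient matrix and its inverse. -/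
theorem stmt_3 {L W : Type*} [NormedAddCommGroup L] [InnerProductSpace ℝ L]
    [NormedAddCommGroup W] [InnerProductSpace ℝ W]
    (grad : L →ₗ[ℝ] W) (dvg : W →ₗ[ℝ] L)
    (A Ainv : W →ₗ[ℝ] W)
    (hAsymm : ∀ ξ η : W, (inner ℝ (A ξ) η : ℝ) = (inner ℝ ξ (A η) : ℝ))
    (μ₁ μ₂ : ℝ) (hμ₁ : 0 < μ₁) (hμ₂ : 0 < μ₂)
    (hAlow : ∀ ξ : W, μ₁ * ‖ξ‖ ^ 2 ≤ (inner ℝ (A ξ) ξ : ℝ))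
    (hAup : ∀ ξ : W, (inner ℝ (A ξ) ξ : ℝ) ≤ μ₂ * ‖ξ‖ ^ 2)
    (hAinv : ∀ ξ : W, A (Ainv ξ) = ξ ∧ Ainv (A ξ) = ξ)
    (σ σs : ℝ) (hσ0 : 0 ≤ σ) (hσs : 0 < σs) (hσσ : σ ≤ σs)
    (f u v : L) (z : W)
    -- u is the weak solution of −div(A∇u) + σu = f
    (hweak : ∀ φ : L, (inner ℝ (A (grad u)) (grad φ) : ℝ) + σ * (inner ℝ u φ : ℝ)
        = (inner ℝ f φ : ℝ))
    -- integration by parts for z ∈ H(Ω, div)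
    (hibp : ∀ φ : L, (inner ℝ z (grad φ) : ℝ) = -(inner ℝ (dvg z) φ : ℝ))
    -- the critical-value inequality ‖u−v‖²_A / ‖u−v‖²_{L²} ≥ σ*
    (hcrit : σs * ‖u - v‖ ^ 2 ≤ (inner ℝ (A (grad (u - v))) (grad (u - v)) : ℝ)) :
    (inner ℝ (A (grad (v - u))) (grad (v - u)) : ℝ) + σ * ‖v - u‖ ^ 2 ≤
      (2 / (1 + σ / σs)) *
        ((inner ℝ (Ainv (A (grad v) + z)) (A (grad v) + z) : ℝ) +
          (1 / σs) * ‖f - σ • v - dvg z‖ ^ 2) := by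
  set e : L := v - u with he
  set y : W := A (grad v) + z with hy
  set r : L := f - σ • v - dvg z with hr
  have hQpos : ∀ ξ : W, 0 ≤ (inner ℝ (A ξ) ξ : ℝ) := fun ξ =>
    le_trans (by positivity) (hAlow ξ)
  set Qe : ℝ := inner ℝ (A (grad e)) (grad e) with hQe
  set Qy : ℝ := inner ℝ (Ainv y) y with hQy
  set P : ℝ := inner ℝ y (grad e) with hP
  set R : ℝ := inner ℝ r e with hR
  set D : ℝ := σs + σ with hD
  have hDpos : 0 < D := by positivity
  -- hcrit in terms of e
  have huv : u - v = -e := by simp [he]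
  have hcrit' : σs * ‖e‖ ^ 2 ≤ Qe := by
    have h1 : ‖u - v‖ = ‖e‖ := by rw [huv, norm_neg]
    have h2 : (inner ℝ (A (grad (u - v))) (grad (u - v)) : ℝ) = Qe := by
      rw [huv, map_neg, map_neg, inner_neg_neg]
    rw [h1, h2] at hcrit; exact hcrit
  -- the key identity
  have hid : Qe + σ * ‖e‖ ^ 2 = P - R := by
    have hwe := hweak e
    have hbe := hibp e
    have hge : grad e = grad v - grad u := by rw [he, map_sub]
    have hee : (inner ℝ e e : ℝ) = ‖e‖ ^ 2 := real_inner_self_eq_norm_sq e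
    have hQe' : Qe = inner ℝ (A (grad v)) (grad e) - inner ℝ (A (grad u)) (grad e) := by
      rw [hQe, hge, map_sub, inner_sub_left]
    have hie : (inner ℝ u e : ℝ) = inner ℝ v e - inner ℝ e e := by
      have h : (inner ℝ e e : ℝ) = inner ℝ v e - inner ℝ u e := by
        rw [he, inner_sub_left]
      linarith
    have hP' : P = inner ℝ (A (grad v)) (grad e) - inner ℝ (dvg z) e := by
      rw [hP, hy, inner_add_left, hbe]; ring
    have hR' : R = inner ℝ f e - σ * inner ℝ v e - inner ℝ (dvg z) e := by
      rw [hR, hr, inner_sub_left, inner_sub_left, real_inner_smul_left]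
    rw [hP', hR', hQe', ← hee]
    rw [hie] at hwe
    linarith
  -- F1 : Young for the A-form
  have F1 : 4*σs*D*P ≤ 4*σs^2*Qy + D^2*Qe := by
    have h0 := hQpos ((2*σs) • Ainv y - D • grad e)
    have hax : A ((2*σs) • Ainv y - D • grad e)
        = (2*σs) • A (Ainv y) - D • A (grad e) := by
      rw [map_sub, map_smul, map_smul]
    rw [hax] at h0
    have hAAy : A (Ainv y) = y := (hAinv y).1
    rw [hAAy] at h0
    have hexp : (inner ℝ ((2*σs) • y - D • A (grad e)) ((2*σs) • Ainv y - D • grad e) : ℝ)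
        = (2*σs)*(2*σs)*(inner ℝ y (Ainv y) : ℝ) - (2*σs)*D*(inner ℝ y (grad e) : ℝ)
          - D*(2*σs)*(inner ℝ (A (grad e)) (Ainv y) : ℝ) + D*D*Qe := by
      rw [inner_sub_left, inner_sub_right, inner_sub_right,
        real_inner_smul_left, real_inner_smul_left, real_inner_smul_left,
        real_inner_smul_left, real_inner_smul_right, real_inner_smul_right,
        real_inner_smul_right, real_inner_smul_right]
      ring
    have h1 : (inner ℝ y (Ainv y) : ℝ) = Qy := real_inner_comm _ _
    have h2 : (inner ℝ (A (grad e)) (Ainv y) : ℝ) = P := by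
      rw [hAsymm, hAAy, real_inner_comm]
    rw [hexp, h1, h2] at h0
    nlinarith [h0]
  -- F2 : Young for the L² term
  have F2 : -(4*D*R) ≤ 4*‖r‖^2 + D^2*‖e‖^2 := by
    have h0 : (0:ℝ) ≤ inner ℝ ((2:ℝ) • r + D • e) ((2:ℝ) • r + D • e) :=
      real_inner_self_nonneg
    have hexp : (inner ℝ ((2:ℝ) • r + D • e) ((2:ℝ) • r + D • e) : ℝ)
        = 4*(inner ℝ r r : ℝ) + 2*D*(inner ℝ r e : ℝ) + 2*D*(inner ℝ e r : ℝ)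
          + D*D*(inner ℝ e e : ℝ) := by
      rw [inner_add_left, inner_add_right, inner_add_right,
        real_inner_smul_left, real_inner_smul_left, real_inner_smul_left,
        real_inner_smul_left, real_inner_smul_right, real_inner_smul_right,
        real_inner_smul_right, real_inner_smul_right]
      ring
    have hc : (inner ℝ e r : ℝ) = inner ℝ r e := real_inner_comm r e
    rw [hexp, hc, real_inner_self_eq_norm_sq, real_inner_self_eq_norm_sq] at h0
    rw [hR]
    nlinarith [h0]
  -- conclude
  have hmain : (Qe + σ * ‖e‖ ^ 2) * D ≤ 2*σs*Qy + 2*‖r‖^2 :=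
    aux_alg Qe (‖e‖^2) Qy (‖r‖^2) P R σ σs hσ0 hσs hσσ hcrit' hid F1 F2
  have hrhs : (2 / (1 + σ / σs)) * (Qy + (1 / σs) * ‖r‖ ^ 2)
      = (2*σs*Qy + 2*‖r‖^2) / D := by
    rw [hD]; field_simp
  rw [hrhs, le_div_iff₀ hDpos]
  exact hmain
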